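/- Let X be a T₀ space and ℱ a family of sets of the form ↑F with F a nonempty finite subset of X. If ℱ is an irreducible subset of the Smyth power space P_S(X), then there exists an irreducible subset A of X with A ⊆ ⋃ℱ such that A ∩ ↑F ≠ ∅ for every ↑F ∈ ℱ. -/

import Mathlib

open Set

/-- Specialization order: `x ≤ y` iff `x ∈ cl {y}`. -/
def specLE {X : Type} [TopologicalSpace X] (x y : X) : Prop := x ∈ closure {y}

/-- Upward closure w.r.t. the specialization order. -/
def upClosure {X : Type} [TopologicalSpace X] (A : Set X) : Set X :=
  {y | ∃ a ∈ A, specLE a y}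

/-- The underlying set of the Smyth power space: nonempty compact saturated subsets. -/
def SmythPS (X : Type) [TopologicalSpace X] : Type :=
  {K : Set X // K.Nonempty ∧ IsCompact K ∧ ∀ x ∈ K, ∀ y, specLE x y → y ∈ K}

/-- `□U = {K ∈ Q(X) : K ⊆ U}`. -/
def boxU {X : Type} [TopologicalSpace X] (U : Set X) : Set (SmythPS X) :=
  {K : SmythPS X | K.1 ⊆ U}

/-- The upper Vietoris topology on the Smyth power space. -/
instance smythTop (X : Type) [TopologicalSpace X] : TopologicalSpace (SmythPS X) :=
  TopologicalSpace.generateFrom {S : Set (SmythPS X) | ∃ U : Set X, IsOpen U ∧ S = boxU U}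

/-- The cut `A^δ = (A^↑)^↓` w.r.t. the specialization order. -/
def cutD {X : Type} [TopologicalSpace X] (A : Set X) : Set X :=
  {x | ∀ u : X, (∀ a ∈ A, specLE a u) → specLE x u}

/-- `U` is SI₂-open. -/
def SI2Open {X : Type} [TopologicalSpace X] (U : Set X) : Prop :=
  IsOpen U ∧ ∀ F : Set X, IsIrreducible F → (cutD F ∩ U).Nonempty → (F ∩ U).Nonempty

/-- `le` makes `I` the index of a net: nonempty, reflexive, transitive, directed. -/
def IsNetOrder {I : Type} (le : I → I → Prop) : Prop :=
  Nonempty I ∧ (∀ i, le i i) ∧ (∀ i j k, le i j → le j k → le i k) ∧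
    (∀ i j, ∃ k, le i k ∧ le j k)

/-- GSI₂-convergence of the net `xi` (indexed by `(I, le)`) to `x`. -/
def GSI2Conv {X : Type} [TopologicalSpace X] {I : Type} (le : I → I → Prop)
    (xi : I → X) (x : X) : Prop :=
  ∃ 𝒢 : Set (Set X), (∀ G ∈ 𝒢, G.Finite ∧ G.Nonempty) ∧
    IsIrreducible {K : SmythPS X | ∃ G ∈ 𝒢, K.1 = upClosure G} ∧
    (∀ U : Set X, IsOpen U → (∃ G ∈ 𝒢, upClosure G ⊆ U) →
      ∃ i₀, ∀ i, le i₀ i → xi i ∈ U) ∧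
    (⋂ G ∈ 𝒢, upClosure G) ⊆ upClosure {x}

/-- `A ≪_{I₂} B`. -/
def WayBelowI2 {X : Type} [TopologicalSpace X] (A B : Set X) : Prop :=
  ∀ D : Set X, IsIrreducible D → (cutD D ∩ B).Nonempty → (A ∩ closure D).Nonempty

/-- `w(x) = {↑F : F nonempty finite, F ≪_{I₂} x}` as a subset of the Smyth power space. -/
def wPS {X : Type} [TopologicalSpace X] (x : X) : Set (SmythPS X) :=
  {K : SmythPS X | ∃ F : Set X, F.Finite ∧ F.Nonempty ∧ WayBelowI2 F {x} ∧ K.1 = upClosure F}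

/-- QI₂-continuity. -/
def QI2Continuous (X : Type) [TopologicalSpace X] : Prop :=
  ∀ x : X, IsIrreducible (wPS x) ∧ upClosure {x} = ⋂ K ∈ wPS x, (K.1 : Set X)

/-- Strong QI₂-continuity. -/
def StronglyQI2Continuous (X : Type) [TopologicalSpace X] : Prop :=
  QI2Continuous X ∧
  ∀ (F : Set X) (x : X) (U : Set X), F.Finite → F.Nonempty → WayBelowI2 F {x} →
    IsOpen U → F ⊆ U → ∃ W : Set X, SI2Open W ∧ x ∈ W ∧ W ⊆ U

theorem stmt7 {X : Type} [TopologicalSpace X] [T0Space X] (ℱ : Set (SmythPS X))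
    (hfin : ∀ K ∈ ℱ, ∃ F : Set X, F.Finite ∧ F.Nonempty ∧ K.1 = upClosure F)
    (hirr : IsIrreducible ℱ) :
    ∃ A : Set X, IsIrreducible A ∧ A ⊆ (⋃ K ∈ ℱ, (K.1 : Set X)) ∧
      ∀ K ∈ ℱ, (A ∩ K.1).Nonempty := by
  classical
  -- The family of closed sets meeting every member of ℱ
  set S : Set (Set X) := {C | IsClosed C ∧ ∀ K ∈ ℱ, (C ∩ K.1).Nonempty} with hS
  have hXS : (univ : Set X) ∈ S := by
    refine ⟨isClosed_univ, fun K hK => ?_⟩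
    obtain ⟨F, hFfin, hFne, hFe⟩ := hfin K hK
    obtain ⟨a, ha⟩ := hFne
    exact ⟨a, mem_univ a, by rw [hFe]; exact ⟨a, ha, subset_closure rfl⟩⟩
  -- Zorn's lemma: get a minimal element of S
  obtain ⟨C, -, hCS, hCmin⟩ := zorn_superset_nonempty S (fun c hcS hc hcne => by
    refine ⟨⋂₀ c, ⟨isClosed_sInter (fun D hD => (hcS hD).1), fun K hK => ?_⟩,
      fun s hs => sInter_subset_of_mem hs⟩
    have hKc : IsCompact K.1 := K.2.2.1
    have : (K.1 ∩ ⋂ i : c, i.1).Nonempty := by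
      refine hKc.inter_iInter_nonempty (fun i : c => i.1) (fun i => (hcS i.2).1)
        (fun u => ?_)
      rcases u.eq_empty_or_nonempty with rfl | hune
      · simpa using K.2.1
      · obtain ⟨m, hmu, hmmin⟩ := u.exists_minimal hune
        obtain ⟨x, hx1, hx2⟩ := (hcS m.2).2 K hK
        refine ⟨x, hx2, mem_iInter₂.2 fun j hju => ?_⟩
        rcases eq_or_ne j m with rfl | hjm
        · exact hx1
        · rcases hc j.2 m.2 (fun h => hjm (Subtype.ext h)) with h | h
          · exact (hmmin hju h : (m : Set X) ⊆ j) hx1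
          · exact h hx1
    obtain ⟨x, hx1, hx2⟩ := this
    exact ⟨x, mem_sInter.2 fun D hD => mem_iInter.1 hx2 ⟨D, hD⟩, hx1⟩) univ hXS
  obtain ⟨hCcl, hCmeet⟩ := hCS
  -- closed sets are down-closed w.r.t. specialization
  have hdown : ∀ {D : Set X}, IsClosed D → ∀ {a b : X}, specLE a b → b ∈ D → a ∈ D := by
    intro D hD a b hab hb
    exact hD.closure_subset_iff.2 (singleton_subset_iff.2 hb) hab
  -- C is irreducible
  have hCne : C.Nonempty := by
    obtain ⟨K, hK⟩ := hirr.1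
    obtain ⟨x, hx, -⟩ := hCmeet K hK
    exact ⟨x, hx⟩
  have hboxOpen : ∀ U : Set X, IsOpen U → IsOpen (boxU (X := X) U) := by
    intro U hU
    exact TopologicalSpace.GenerateOpen.basic _ ⟨U, hU, rfl⟩
  have hCirr : IsIrreducible C := by
    refine ⟨hCne, fun U V hU hV hCU hCV => ?_⟩
    by_contra hcon
    -- C \ U is a proper closed subset of C, so not in S; similarly C \ V
    have hCU' : ∃ K ∈ ℱ, ((C \ U) ∩ K.1) = ∅ := by
      by_contra h
      push_neg at h
      have : C \ U ∈ S := ⟨hCcl.sdiff hU, fun K hK =>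
        h K hK⟩
      obtain ⟨x, hxC, hxU⟩ := hCU
      exact (hCmin this diff_subset hxC).2 hxU
    have hCV' : ∃ K ∈ ℱ, ((C \ V) ∩ K.1) = ∅ := by
      by_contra h
      push_neg at h
      have : C \ V ∈ S := ⟨hCcl.sdiff hV, fun K hK =>
        h K hK⟩
      obtain ⟨x, hxC, hxV⟩ := hCV
      exact (hCmin this diff_subset hxC).2 hxV
    obtain ⟨K₁, hK₁, hK₁e⟩ := hCU'
    obtain ⟨K₂, hK₂, hK₂e⟩ := hCV'
    have h₁ : K₁ ∈ boxU (X := X) (C \ U)ᶜ := fun x hx hxc =>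
      (eq_empty_iff_forall_notMem.1 hK₁e x) ⟨hxc, hx⟩
    have h₂ : K₂ ∈ boxU (X := X) (C \ V)ᶜ := fun x hx hxc =>
      (eq_empty_iff_forall_notMem.1 hK₂e x) ⟨hxc, hx⟩
    obtain ⟨K, hKℱ, hK1, hK2⟩ := hirr.2 _ _ (hboxOpen _ (hCcl.sdiff hU).isOpen_compl)
      (hboxOpen _ (hCcl.sdiff hV).isOpen_compl) ⟨K₁, hK₁, h₁⟩ ⟨K₂, hK₂, h₂⟩
    obtain ⟨x, hxC, hxK⟩ := hCmeet K hKℱ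
    have hxU : x ∈ U := by
      by_contra h
      exact hK1 hxK ⟨hxC, h⟩
    have hxV : x ∈ V := by
      by_contra h
      exact hK2 hxK ⟨hxC, h⟩
    exact hcon ⟨x, hxC, hxU, hxV⟩
  -- Define A
  refine ⟨C ∩ ⋃ K ∈ ℱ, (K.1 : Set X), ?_, inter_subset_right, ?_⟩
  · -- A is irreducible since its closure equals C
    have hmeet : ∀ K ∈ ℱ, ((C ∩ ⋃ K ∈ ℱ, (K.1 : Set X)) ∩ K.1).Nonempty := by
      intro K hK
      obtain ⟨F, hFfin, hFne, hFe⟩ := hfin K hK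
      obtain ⟨c, hcC, hcK⟩ := hCmeet K hK
      rw [hFe] at hcK
      obtain ⟨a, haF, hac⟩ := hcK
      have haC : a ∈ C := hdown hCcl hac hcC
      have haK : a ∈ K.1 := by rw [hFe]; exact ⟨a, haF, subset_closure rfl⟩
      exact ⟨a, ⟨haC, mem_iUnion₂.2 ⟨K, hK, haK⟩⟩, haK⟩
    have hclA : closure (C ∩ ⋃ K ∈ ℱ, (K.1 : Set X)) = C := by
      have hsub : closure (C ∩ ⋃ K ∈ ℱ, (K.1 : Set X)) ⊆ C :=
        hCcl.closure_subset_iff.2 inter_subset_left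
      refine subset_antisymm hsub (hCmin ⟨isClosed_closure, fun K hK => ?_⟩ hsub)
      obtain ⟨a, ha1, ha2⟩ := hmeet K hK
      exact ⟨a, subset_closure ha1, ha2⟩
    rw [← isIrreducible_iff_closure, hclA]
    exact hCirr
  · intro K hK
    obtain ⟨F, hFfin, hFne, hFe⟩ := hfin K hK
    obtain ⟨c, hcC, hcK⟩ := hCmeet K hK
    rw [hFe] at hcK
    obtain ⟨a, haF, hac⟩ := hcK
    have haC : a ∈ C := hdown hCcl hac hcC
    have haK : a ∈ K.1 := by rw [hFe]; exact ⟨a, haF, subset_closure rfl⟩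
    exact ⟨a, ⟨haC, mem_iUnion₂.2 ⟨K, hK, haK⟩⟩, haK⟩
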